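/- Let x ∈ ℤ and let z = (x+1) + jx or z = (x+1) − jx in ℤ[j]. The following are equivalent: (i) η(z) = 2x + 1 is a prime element of ℤ; (ii) z is irreducible in ℤ[j]; (iii) z is a prime element of ℤ[j]. -/

import Mathlib

private lemma diag_dvd_iff (x e : ℤ) (he : e * e = 1) (w : ℤ√1) :
    (⟨x + 1, e * x⟩ : ℤ√1) ∣ w ↔ (2 * x + 1) ∣ (w.re + e * w.im) := by
  constructor
  · rintro ⟨v, rfl⟩
    refine ⟨v.re + e * v.im, ?_⟩
    simp only [Zsqrtd.re_mul, Zsqrtd.im_mul]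
    linear_combination (x * v.re) * he
  · rintro ⟨k, hk⟩
    refine ⟨⟨w.re - x * k, e * ((x + 1) * k - w.re)⟩, ?_⟩
    ext <;> simp only [Zsqrtd.re_mul, Zsqrtd.im_mul]
    · linear_combination (-(x * ((x + 1) * k - w.re))) * he
    · linear_combination e * hk + (-w.im) * he

private lemma diag_isUnit_iff (x e : ℤ) (he : e * e = 1) :
    IsUnit (⟨x + 1, e * x⟩ : ℤ√1) ↔ IsUnit (2 * x + 1) := by
  rw [isUnit_iff_dvd_one, isUnit_iff_dvd_one, diag_dvd_iff x e he]
  simp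

private lemma diag_prime (x e : ℤ) (he : e * e = 1) (hp : Prime (2 * x + 1)) :
    Prime (⟨x + 1, e * x⟩ : ℤ√1) := by
  refine ⟨?_, fun h => hp.not_unit ((diag_isUnit_iff x e he).mp h), fun a b hab => ?_⟩
  · intro h
    have h1 : x + 1 = 0 := congrArg Zsqrtd.re h
    have h2 : e * x = 0 := congrArg Zsqrtd.im h
    have : e = 0 := by
      rcases mul_eq_zero.mp h2 with h | h
      · exact h
      · omega
    rw [this] at he; simp at he
  · rw [diag_dvd_iff x e he] at hab ⊢
    rw [diag_dvd_iff x e he]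
    have key : (a * b).re + e * (a * b).im = (a.re + e * a.im) * (b.re + e * b.im) := by
      simp only [Zsqrtd.re_mul, Zsqrtd.im_mul]
      linear_combination (-(a.im * b.im)) * he
    rw [key] at hab
    exact hp.2.2 _ _ hab

private lemma diag_irred (x e : ℤ) (he : e * e = 1)
    (hp : Prime (⟨x + 1, e * x⟩ : ℤ√1)) : Irreducible (⟨x + 1, e * x⟩ : ℤ√1) := by
  have hne : (2 * x + 1 : ℤ) ≠ 0 := by omega
  have hee : e ≠ 0 := by intro h; rw [h] at he; simp at he
  refine ⟨hp.not_unit, fun a b hab => ?_⟩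
  have key : ∀ c d : ℤ√1, (⟨x + 1, e * x⟩ : ℤ√1) = ⟨x + 1, e * x⟩ * c * d → IsUnit d := by
    intro c d hcd
    have hw : (⟨x + 1, e * x⟩ : ℤ√1) * (c * d) = ⟨x + 1, e * x⟩ := by
      rw [← mul_assoc, ← hcd]
    have h1 := congrArg Zsqrtd.re hw
    have h2 := congrArg Zsqrtd.im hw
    simp only [Zsqrtd.re_mul, Zsqrtd.im_mul] at h1 h2
    set p := c.re * d.re + c.im * d.im with hpdef
    set q := c.re * d.im + c.im * d.re with hqdef
    have k1 : (2 * x + 1) * (p + e * q) = (2 * x + 1) * 1 := by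
      linear_combination h1 + e * h2 + (x - x * p) * he
    have k2 : p - e * q = 1 := by
      linear_combination h1 - e * h2 + (x * p - x) * he
    have k3 : p + e * q = 1 := mul_left_cancel₀ hne k1
    have hq : q = 0 := by
      have h0 : e * q = 0 := by omega
      exact (mul_eq_zero.mp h0).resolve_left hee
    have hp1 : p = 1 := by omega
    have hone : c * d = 1 := by
      ext <;> simp only [Zsqrtd.re_mul, Zsqrtd.im_mul, Zsqrtd.re_one, Zsqrtd.im_one]
      · linear_combination hp1
      · linear_combination hq
    exact IsUnit.of_mul_eq_one c (by rw [mul_comm]; exact hone)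
  rcases hp.2.2 a b (hab ▸ dvd_refl _) with ⟨c, rfl⟩ | ⟨c, rfl⟩
  · exact Or.inr (key c b hab)
  · exact Or.inl (key c a (by linear_combination hab))

private lemma diag_norm_prime (x e : ℤ) (he : e * e = 1)
    (hirr : Irreducible (⟨x + 1, e * x⟩ : ℤ√1)) : Prime (2 * x + 1) := by
  rw [← irreducible_iff_prime]
  refine ⟨fun h => hirr.not_isUnit ((diag_isUnit_iff x e he).mpr h), fun a b hab => ?_⟩
  have hodd : Odd (a * b) := by rw [← hab]; exact ⟨x, by ring⟩
  rw [Int.odd_mul] at hodd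
  obtain ⟨⟨s, rfl⟩, ⟨t, rfl⟩⟩ := hodd
  have hx : x = 2 * s * t + s + t := by
    have h2 : 2 * x + 1 = 2 * (2 * s * t + s + t) + 1 := by linear_combination hab
    omega
  have hfac : (⟨x + 1, e * x⟩ : ℤ√1) = ⟨s + 1, e * s⟩ * ⟨t + 1, e * t⟩ := by
    ext <;> simp only [Zsqrtd.re_mul, Zsqrtd.im_mul] <;> subst hx
    · linear_combination (-(s * t)) * he
    · ring
  rcases hirr.isUnit_or_isUnit hfac with h | h
  · exact Or.inl ((diag_isUnit_iff s e he).mp h)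
  · exact Or.inr ((diag_isUnit_iff t e he).mp h)

/-- For `z = (x+1) + jx` or `z = (x+1) − jx` in ℤ[j], TFAE:
(i) `η(z) = 2x + 1` is prime in ℤ; (ii) `z` is irreducible in ℤ[j];
(iii) `z` is prime in ℤ[j]. -/
theorem tfae_diag_neighbors (x : ℤ) (z : ℤ√1)
    (hz : z = ⟨x + 1, x⟩ ∨ z = ⟨x + 1, -x⟩) :
    (Prime (2 * x + 1) ↔ Irreducible z) ∧ (Irreducible z ↔ Prime z) := by
  obtain rfl | rfl := hz
  · have h1 : (⟨x + 1, x⟩ : ℤ√1) = ⟨x + 1, 1 * x⟩ := by ext <;> simp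
    rw [h1]
    exact ⟨⟨fun h => diag_irred x 1 (by ring) (diag_prime x 1 (by ring) h),
        fun h => diag_norm_prime x 1 (by ring) h⟩,
      ⟨fun h => diag_prime x 1 (by ring) (diag_norm_prime x 1 (by ring) h),
        fun h => diag_irred x 1 (by ring) h⟩⟩
  · have h1 : (⟨x + 1, -x⟩ : ℤ√1) = ⟨x + 1, (-1) * x⟩ := by ext <;> simp
    rw [h1]
    exact ⟨⟨fun h => diag_irred x (-1) (by ring) (diag_prime x (-1) (by ring) h),
        fun h => diag_norm_prime x (-1) (by ring) h⟩,
      ⟨fun h => diag_prime x (-1) (by ring) (diag_norm_prime x (-1) (by ring) h),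
        fun h => diag_irred x (-1) (by ring) h⟩⟩
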